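/- Every algebra A in a quasivariety Q is isomorphic to a Q-subdirect product of Q-subdirectly irreducible members of Q. -/

import Mathlib

/-- An algebraic signature: a type of operation symbols with arities. -/
structure Signature where
  ops : Type
  arity : ops → ℕ

/-- An algebra for a signature `S`. -/
structure Alg (S : Signature) where
  carrier : Type
  interp : ∀ o : S.ops, (Fin (S.arity o) → carrier) → carrier

/-- Terms over a set `X` of variables. -/
inductive Term (S : Signature) (X : Type) : Type where
  | var : X → Term S X
  | op : (o : S.ops) → (Fin (S.arity o) → Term S X) → Term S X

variable {S : Signature}

/-- Evaluation of a term in an algebra under an assignment of variables. -/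
def Term.eval {X : Type} (A : Alg S) (h : X → A.carrier) : Term S X → A.carrier
  | .var x => h x
  | .op o args => A.interp o (fun i => (args i).eval A h)

/-- Application of a substitution to a term. -/
def Term.subst (σ : ℕ → Term S ℕ) : Term S ℕ → Term S ℕ
  | .var x => σ x
  | .op o args => .op o (fun i => (args i).subst σ)

/-- Homomorphisms of algebras. -/
def IsHom (A B : Alg S) (f : A.carrier → B.carrier) : Prop :=
  ∀ (o : S.ops) (args : Fin (S.arity o) → A.carrier),
    f (A.interp o args) = B.interp o (fun i => f (args i))

/-- Embeddings of algebras: injective homomorphisms. -/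
def IsEmbedding (A B : Alg S) (f : A.carrier → B.carrier) : Prop :=
  IsHom A B f ∧ Function.Injective f

/-- `A` embeds into `B` (i.e. `A` is isomorphic to a subalgebra of `B`). -/
def Embeds (A B : Alg S) : Prop := ∃ f, IsEmbedding A B f

/-- Isomorphism of algebras. -/
def Iso (A B : Alg S) : Prop := ∃ f, IsHom A B f ∧ Function.Bijective f

/-- Product of a family of algebras. -/
def ProdAlg {I : Type} (F : I → Alg S) : Alg S where
  carrier := ∀ i, (F i).carrier
  interp o args i := (F i).interp o (fun j => args j i)

/-- Binary product of algebras. -/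
def Alg.prod (A B : Alg S) : Alg S where
  carrier := A.carrier × B.carrier
  interp o args := (A.interp o (fun i => (args i).1), B.interp o (fun i => (args i).2))

/-- `A` is a subdirect product of the family `F`: there is an embedding of `A`
into the product whose composition with each projection is surjective. -/
def IsSubdirectProduct (A : Alg S) {I : Type} (F : I → Alg S) : Prop :=
  ∃ f : A.carrier → (ProdAlg F).carrier,
    IsEmbedding A (ProdAlg F) f ∧ ∀ i, Function.Surjective (fun a => f a i)

/-- An equation: an ordered pair of terms. -/
abbrev Eqn (S : Signature) (X : Type) := Term S X × Term S X

/-- An equation holds in an algebra. -/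
def Alg.SatisfiesEqn {X : Type} (A : Alg S) (e : Eqn S X) : Prop :=
  ∀ h : X → A.carrier, e.1.eval A h = e.2.eval A h

/-- An equation is valid in a class of algebras. -/
def EqValid (K : Set (Alg S)) (e : Eqn S ℕ) : Prop := ∀ A ∈ K, A.SatisfiesEqn e

/-- A quasiequation: finitely many premises and one conclusion. -/
structure Quasieq (S : Signature) where
  prem : List (Eqn S ℕ)
  concl : Eqn S ℕ

/-- A quasiequation holds in an algebra. -/
def Alg.SatisfiesQ (A : Alg S) (q : Quasieq S) : Prop :=
  ∀ h : ℕ → A.carrier,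
    (∀ e ∈ q.prem, e.1.eval A h = e.2.eval A h) →
      q.concl.1.eval A h = q.concl.2.eval A h

/-- The quasivariety generated by `K`: the class axiomatized by all
quasiequations valid in `K`. -/
def QGen (K : Set (Alg S)) : Set (Alg S) :=
  { A | ∀ q : Quasieq S, (∀ B ∈ K, B.SatisfiesQ q) → A.SatisfiesQ q }

/-- The variety generated by `K`: the class axiomatized by all
equations valid in `K`. -/
def VGen (K : Set (Alg S)) : Set (Alg S) :=
  { A | ∀ e : Eqn S ℕ, (∀ B ∈ K, B.SatisfiesEqn e) → A.SatisfiesEqn e }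

/-- A quasivariety is a class axiomatizable by quasiequations. -/
def IsQuasivariety (Q : Set (Alg S)) : Prop := QGen Q = Q

/-- `A` is `Q`-subdirectly irreducible: `A ∈ Q` and for every `Q`-subdirect
representation of `A`, `A` is isomorphic to one of the components. -/
def QSubdirectlyIrreducible (Q : Set (Alg S)) (A : Alg S) : Prop :=
  A ∈ Q ∧ ∀ (I : Type) (F : I → Alg S), (∀ i, F i ∈ Q) →
    IsSubdirectProduct A F → ∃ i, Iso A (F i)

/-- A congruence on an algebra. -/
structure Cong (A : Alg S) where
  r : A.carrier → A.carrier → Prop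
  iseqv : Equivalence r
  compat : ∀ (o : S.ops) (a b : Fin (S.arity o) → A.carrier),
    (∀ i, r (a i) (b i)) → r (A.interp o a) (A.interp o b)

def Cong.setoid {A : Alg S} (θ : Cong A) : Setoid A.carrier := ⟨θ.r, θ.iseqv⟩

/-- Quotient algebra of `A` by a congruence `θ`. -/
noncomputable def QuotAlg (A : Alg S) (θ : Cong A) : Alg S where
  carrier := Quotient θ.setoid
  interp o args := Quotient.mk θ.setoid (A.interp o (fun i => (args i).out))

/-- The term algebra over variables `X`. -/
def TermAlg (S : Signature) (X : Type) : Alg S where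
  carrier := Term S X
  interp := Term.op

/-- The congruence of all identifications valid in `K` on the term algebra:
the intersection of all congruences whose quotient embeds into a member of `K`. -/
def freeCong (K : Set (Alg S)) (X : Type) : Cong (TermAlg S X) where
  r φ ψ := ∀ A ∈ K, ∀ h : X → A.carrier, φ.eval A h = ψ.eval A h
  iseqv := by
    constructor
    · intro φ A hA h; rfl
    · intro φ ψ H A hA h; exact (H A hA h).symm
    · intro a b c H1 H2 A hA h; exact (H1 A hA h).trans (H2 A hA h)
  compat := by
    intro o a b hab A hA h
    show Term.eval A h (Term.op o a) = Term.eval A h (Term.op o b)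
    simp only [Term.eval]
    congr 1
    funext i
    exact hab i A hA h

/-- The free algebra of `K` over variables `X`. -/
noncomputable def FreeAlg (K : Set (Alg S)) (X : Type) : Alg S :=
  QuotAlg (TermAlg S X) (freeCong K X)

/-- `σ` is a `K`-unifier of the finite set of equations `Γ`. -/
def Unifier (K : Set (Alg S)) (σ : ℕ → Term S ℕ) (Γ : List (Eqn S ℕ)) : Prop :=
  ∀ e ∈ Γ, EqValid K (e.1.subst σ, e.2.subst σ)

/-- `Γ` is `K`-unifiable. -/
def Unifiable (K : Set (Alg S)) (Γ : List (Eqn S ℕ)) : Prop := ∃ σ, Unifier K σ Γ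

/-- The quasiequation `Γ ⇒ e` is `K`-admissible: every `K`-unifier of the
premises unifies the conclusion. -/
def Admissible (K : Set (Alg S)) (Γ : List (Eqn S ℕ)) (e : Eqn S ℕ) : Prop :=
  ∀ σ, Unifier K σ Γ → EqValid K (e.1.subst σ, e.2.subst σ)

/-- The quasiequation `Γ ⇒ e` is valid in the class `K` (`Γ ⊨_K e`). -/
def Models (K : Set (Alg S)) (Γ : List (Eqn S ℕ)) (e : Eqn S ℕ) : Prop :=
  ∀ A ∈ K, ∀ h : ℕ → A.carrier,
    (∀ e' ∈ Γ, e'.1.eval A h = e'.2.eval A h) → e.1.eval A h = e.2.eval A h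

/-- `Γ` is satisfiable in the algebra `A`. -/
def SatIn (A : Alg S) (Γ : List (Eqn S ℕ)) : Prop :=
  ∃ h : ℕ → A.carrier, ∀ e ∈ Γ, e.1.eval A h = e.2.eval A h

namespace SDP
variable {S : Signature}

lemma eval_hom {X : Type} {A B : Alg S} {k : A.carrier → B.carrier} (hk : IsHom A B k)
    (h : X → A.carrier) (t : Term S X) : k (t.eval A h) = t.eval B (fun x => k (h x)) := by
  induction t with
  | var x => rfl
  | op o args ih =>
      show k (A.interp o _) = B.interp o _
      rw [hk o]
      congr 1
      funext i
      exact ih i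

lemma hom_comp {A B C : Alg S} {f : A.carrier → B.carrier} {g : B.carrier → C.carrier}
    (hf : IsHom A B f) (hg : IsHom B C g) : IsHom A C (fun a => g (f a)) := by
  intro o args
  show g (f (A.interp o args)) = _
  rw [hf, hg]

lemma mk_hom (A : Alg S) (θ : Cong A) :
    IsHom A (QuotAlg A θ) (Quotient.mk θ.setoid) := by
  intro o args
  show _ = Quotient.mk θ.setoid (A.interp o fun i => (Quotient.mk θ.setoid (args i)).out)
  apply Quotient.sound
  apply θ.compat
  intro i
  exact θ.iseqv.symm (Quotient.exact (Quotient.out_eq (Quotient.mk θ.setoid (args i))))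

lemma proj_hom {I : Type} (F : I → Alg S) (i : I) :
    IsHom (ProdAlg F) (F i) (fun v => v i) := fun _ _ => rfl

/-- `c` is a `Q`-congruence (as a set of pairs) on `A`. -/
def IsQCongSet (Q : Set (Alg S)) (A : Alg S) (c : Set (A.carrier × A.carrier)) : Prop :=
  (Equivalence fun x y => (x, y) ∈ c) ∧
  (∀ (o : S.ops) (a b : Fin (S.arity o) → A.carrier),
      (∀ i, (a i, b i) ∈ c) → (A.interp o a, A.interp o b) ∈ c) ∧
  (∀ q : Quasieq S, (∀ B ∈ Q, B.SatisfiesQ q) → ∀ h : ℕ → A.carrier,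
      (∀ e ∈ q.prem, (e.1.eval A h, e.2.eval A h) ∈ c) →
      (q.concl.1.eval A h, q.concl.2.eval A h) ∈ c)

def congOf {Q : Set (Alg S)} {A : Alg S} {c : Set (A.carrier × A.carrier)}
    (hc : IsQCongSet Q A c) : Cong A := ⟨fun x y => (x, y) ∈ c, hc.1, hc.2.1⟩

/-- Kernel of a homomorphism into a member of `Q` is a `Q`-congruence. -/
lemma kernel_qcong {Q : Set (Alg S)} {A B : Alg S} (hB : B ∈ Q)
    {k : A.carrier → B.carrier} (hk : IsHom A B k) :
    IsQCongSet Q A {p | k p.1 = k p.2} := by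
  refine ⟨⟨fun _ => rfl, fun h => h.symm, fun h1 h2 => h1.trans h2⟩, ?_, ?_⟩
  · intro o a b hab
    show k (A.interp o a) = k (A.interp o b)
    rw [hk, hk]
    congr 1; funext i; exact hab i
  · intro q hq h hp
    show k (q.concl.1.eval A h) = k (q.concl.2.eval A h)
    rw [eval_hom hk, eval_hom hk]
    apply hq B hB
    intro e he
    rw [← eval_hom hk, ← eval_hom hk]
    exact hp e he

/-- Evaluation in a quotient algebra. -/
lemma eval_quot {A : Alg S} (θ : Cong A) (h : ℕ → (QuotAlg A θ).carrier) (t : Term S ℕ) :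
    t.eval (QuotAlg A θ) h = Quotient.mk θ.setoid (t.eval A (fun n => (h n).out)) := by
  have key := eval_hom (mk_hom A θ) (fun n => (h n).out) t
  rw [key]
  congr 1
  funext n
  exact (Quotient.out_eq (h n)).symm

/-- Quotient by a `Q`-congruence lies in `Q` (when `Q` is a quasivariety). -/
lemma quot_mem {Q : Set (Alg S)} (hQ : IsQuasivariety Q) {A : Alg S}
    {c : Set (A.carrier × A.carrier)} (hc : IsQCongSet Q A c) :
    QuotAlg A (congOf hc) ∈ Q := by
  suffices h : QuotAlg A (congOf hc) ∈ QGen Q by rwa [hQ] at h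
  intro q hq h hp
  rw [eval_quot, eval_quot]
  refine Quotient.sound (hc.2.2 q hq (fun n => (h n).out) ?_)
  intro e he
  have := hp e he
  rw [eval_quot, eval_quot] at this
  exact Quotient.exact this

end SDP

namespace SDP
variable {S : Signature}

lemma chain_list {α : Type} {C : Set (Set α)} (hC : IsChain (· ⊆ ·) C) (hne : C.Nonempty) :
    ∀ l : List α, (∀ p ∈ l, p ∈ ⋃₀ C) → ∃ c ∈ C, ∀ p ∈ l, p ∈ c := by
  intro l
  induction l with
  | nil =>
      intro _
      obtain ⟨c, hc⟩ := hne
      exact ⟨c, hc, by simp⟩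
  | cons hd tl ih =>
      intro hmem
      obtain ⟨c, hc, hct⟩ := ih (fun p hp => hmem p (List.mem_cons_of_mem _ hp))
      obtain ⟨c', hc', hhd⟩ := hmem hd (List.mem_cons_self)
      rcases eq_or_ne c c' with rfl | hne'
      · refine ⟨c, hc, ?_⟩
        intro p hp
        rcases List.mem_cons.1 hp with rfl | h
        · exact hhd
        · exact hct p h
      · rcases hC hc hc' hne' with h1 | h2
        · refine ⟨c', hc', ?_⟩
          intro p hp
          rcases List.mem_cons.1 hp with rfl | h
          · exact hhd
          · exact h1 (hct p h)
        · refine ⟨c, hc, ?_⟩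
          intro p hp
          rcases List.mem_cons.1 hp with rfl | h
          · exact h2 hhd
          · exact hct p h

lemma exists_max {Q : Set (Alg S)} {A : Alg S} (hA : A ∈ Q) (a b : A.carrier) (hab : a ≠ b) :
    ∃ c : Set (A.carrier × A.carrier), IsQCongSet Q A c ∧ (a, b) ∉ c ∧
      ∀ c', IsQCongSet Q A c' → (a, b) ∉ c' → c ⊆ c' → c' ⊆ c := by
  set P := {c : Set (A.carrier × A.carrier) | IsQCongSet Q A c ∧ (a, b) ∉ c} with hP
  have hid : IsHom A A id := fun _ _ => rfl
  have hdiag : {p : A.carrier × A.carrier | p.1 = p.2} ∈ P :=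
    ⟨kernel_qcong hA hid, hab⟩
  have Hchain : ∀ C ⊆ P, IsChain (· ⊆ ·) C → C.Nonempty →
      ∃ ub ∈ P, ∀ s ∈ C, s ⊆ ub := by
    intro C hCP hC hne
    refine ⟨⋃₀ C, ⟨⟨?_, ?_, ?_⟩, ?_⟩, fun s hs => Set.subset_sUnion_of_mem hs⟩
    · constructor
      · intro x
        obtain ⟨c, hc⟩ := hne
        exact ⟨c, hc, (hCP hc).1.1.refl x⟩
      · intro x y ⟨c, hc, hxy⟩
        exact ⟨c, hc, (hCP hc).1.1.symm hxy⟩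
      · intro x y z hxy hyz
        obtain ⟨c, hc, hall⟩ := chain_list hC hne [(x, y), (y, z)] (by
          intro p hp
          rcases List.mem_cons.1 hp with rfl | hp
          · exact hxy
          · rcases List.mem_cons.1 hp with rfl | hp
            · exact hyz
            · simp at hp)
        exact ⟨c, hc, (hCP hc).1.1.trans (hall (x, y) (List.mem_cons_self))
          (hall (y, z) (List.mem_cons_of_mem _ (List.mem_cons_self)))⟩
    · intro o u v huv
      obtain ⟨c, hc, hall⟩ := chain_list hC hne (List.ofFn (fun i => (u i, v i))) (by
        intro p hp
        obtain ⟨i, rfl⟩ := (List.mem_ofFn).1 hp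
        exact huv i)
      exact ⟨c, hc, (hCP hc).1.2.1 o u v (fun i => hall _ (by
        exact (List.mem_ofFn).2 ⟨i, rfl⟩))⟩
    · intro q hq h hp
      obtain ⟨c, hc, hall⟩ := chain_list hC hne
        (q.prem.map (fun e => (e.1.eval A h, e.2.eval A h))) (by
          intro p hp'
          obtain ⟨e, he, rfl⟩ := List.mem_map.1 hp'
          exact hp e he)
      exact ⟨c, hc, (hCP hc).1.2.2 q hq h (fun e he =>
        hall _ (List.mem_map_of_mem he))⟩
    · rintro ⟨c, hc, hab'⟩
      exact (hCP hc).2 hab'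
  obtain ⟨m, _, hm⟩ := zorn_subset_nonempty P Hchain _ hdiag
  exact ⟨m, hm.1.1, hm.1.2, fun c' hc1 hc2 hsub => hm.2 ⟨hc1, hc2⟩ hsub⟩

lemma si_of_max {Q : Set (Alg S)} (hQ : IsQuasivariety Q) {A : Alg S}
    {c : Set (A.carrier × A.carrier)} (hc : IsQCongSet Q A c) {a b : A.carrier}
    (hab : (a, b) ∉ c)
    (hmax : ∀ c', IsQCongSet Q A c' → (a, b) ∉ c' → c ⊆ c' → c' ⊆ c) :
    QSubdirectlyIrreducible Q (QuotAlg A (congOf hc)) := by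
  set θ := congOf hc with hθ
  refine ⟨quot_mem hQ hc, ?_⟩
  rintro J G hG ⟨g, ⟨ghom, ginj⟩, gsurj⟩
  have hj : ∃ j, g (Quotient.mk θ.setoid a) j ≠ g (Quotient.mk θ.setoid b) j := by
    by_contra hcon
    push_neg at hcon
    have : g (Quotient.mk θ.setoid a) = g (Quotient.mk θ.setoid b) := funext hcon
    exact hab (Quotient.exact (ginj this))
  obtain ⟨j, hj⟩ := hj
  have hkhom : IsHom A (G j) (fun x => g (Quotient.mk θ.setoid x) j) :=
    hom_comp (mk_hom A θ) (hom_comp ghom (proj_hom G j))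
  have hs : IsQCongSet Q A {p | g (Quotient.mk θ.setoid p.1) j = g (Quotient.mk θ.setoid p.2) j} :=
    kernel_qcong (hG j) hkhom
  have hsub : c ⊆ {p | g (Quotient.mk θ.setoid p.1) j = g (Quotient.mk θ.setoid p.2) j} := by
    intro p hp
    show g _ j = g _ j
    rw [Quotient.sound (a := p.1) (b := p.2) hp]
  have hss := hmax _ hs hj hsub
  refine ⟨j, fun x => g x j, hom_comp ghom (proj_hom G j), ?_, gsurj j⟩
  intro u v huv
  obtain ⟨x, rfl⟩ := Quotient.exists_rep u
  obtain ⟨y, rfl⟩ := Quotient.exists_rep v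
  exact Quotient.sound (hss huv)

end SDP

/-- Every algebra in a quasivariety `Q` is (isomorphic to, via the subdirect
embedding) a `Q`-subdirect product of `Q`-subdirectly irreducible members of `Q`. -/
theorem stmt1 {S : Signature} (Q : Set (Alg S)) (hQ : IsQuasivariety Q)
    (A : Alg S) (hA : A ∈ Q) :
    ∃ (I : Type) (F : I → Alg S),
      (∀ i, F i ∈ Q) ∧ (∀ i, QSubdirectlyIrreducible Q (F i)) ∧
        IsSubdirectProduct A F := by
  classical
  have H : ∀ p : {p : A.carrier × A.carrier // p.1 ≠ p.2},
      ∃ c : Set (A.carrier × A.carrier), SDP.IsQCongSet Q A c ∧ (p.1.1, p.1.2) ∉ c ∧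
        ∀ c', SDP.IsQCongSet Q A c' → (p.1.1, p.1.2) ∉ c' → c ⊆ c' → c' ⊆ c :=
    fun p => SDP.exists_max hA p.1.1 p.1.2 p.2
  choose m hm1 hm2 hm3 using H
  refine ⟨{p : A.carrier × A.carrier // p.1 ≠ p.2},
    fun p => QuotAlg A (SDP.congOf (hm1 p)), fun p => SDP.quot_mem hQ (hm1 p),
    fun p => SDP.si_of_max hQ (hm1 p) (hm2 p) (hm3 p), ?_⟩
  refine ⟨fun x p => Quotient.mk (SDP.congOf (hm1 p)).setoid x, ⟨?_, ?_⟩, ?_⟩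
  · intro o args
    funext p
    exact SDP.mk_hom A (SDP.congOf (hm1 p)) o args
  · intro x y hxy
    by_contra hne
    exact hm2 ⟨(x, y), hne⟩ (Quotient.exact (congrFun hxy ⟨(x, y), hne⟩))
  · intro p u
    exact Quotient.exists_rep u
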